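/- arXiv:1107.4914 — 6 statements merged into one kernel-verified Lean document; each statement's English description precedes it below -/
import Mathlib

section
/- For n ≥ 1 and t > 0, the function I_n(t) = ∫₀ᵗ dt₁ ∫_{t₁}ᵗ dt₂ ⋯ ∫_{t_{n−1}}ᵗ dt_n ∏_{k=1}^{n+1} cosh(c(t_k − t_{k−1})) (with t₀ = 0, t_{n+1} = t) satisfies the difference-differential equation I_n''(t) = I_{n−1}'(t) + c² I_n(t), where I₀(t) = cosh(ct). -/
open Real MeasureTheory

/-- Iterated simplex integral `∫_a^t ds₁ ∫_{s₁}^t ds₂ ⋯ ∫_{s_{n-1}}^t ds_n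
∏_{k=1}^{n+1} f(s_k - s_{k-1})` with `s₀ = a`, `s_{n+1} = t`. -/
noncomputable def iterInt (f : ℝ → ℝ) : ℕ → ℝ → ℝ → ℝ
  | 0, a, t => f (t - a)
  | n+1, a, t => ∫ s in a..t, f (s - a) * iterInt f n s t

/-- `I_n(t) = ∫₀ᵗ dt₁ ⋯ ∫_{t_{n-1}}ᵗ dt_n ∏_{k=1}^{n+1} cosh (c (t_k - t_{k-1}))`,
with `t₀ = 0`, `t_{n+1} = t`; in particular `I_0(t) = cosh (c t)`. -/
noncomputable def I (c : ℝ) (n : ℕ) (t : ℝ) : ℝ :=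
  iterInt (fun u => Real.cosh (c * u)) n 0 t

lemma I_zero (c : ℝ) (t : ℝ) : I c 0 t = Real.cosh (c * t) := by
  simp [I, iterInt]

/-- Translation invariance. -/
lemma iterInt_trans (c : ℝ) : ∀ (n : ℕ) (a t : ℝ),
    iterInt (fun u => Real.cosh (c * u)) n a t = I c n (t - a) := by
  intro n
  induction n with
  | zero => intro a t; simp [iterInt, I]
  | succ n ih =>
    intro a t
    show (∫ s in a..t, Real.cosh (c * (s - a)) * iterInt (fun u => Real.cosh (c * u)) n s t)
        = I c (n+1) (t - a)
    have h1 : (∫ s in a..t, Real.cosh (c * (s - a)) * iterInt (fun u => Real.cosh (c * u)) n s t)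
        = ∫ s in a..t, Real.cosh (c * (s - a)) * I c n ((t - a) - (s - a)) := by
      apply intervalIntegral.integral_congr
      intro s _
      dsimp only
      rw [ih s t]
      ring_nf
    rw [h1]
    have h2 := intervalIntegral.integral_comp_sub_right
      (fun v => Real.cosh (c * v) * I c n ((t - a) - v)) a (a := a) (b := t)
    rw [h2, sub_self]
    show _ = iterInt (fun u => Real.cosh (c * u)) (n+1) 0 (t - a)
    show _ = ∫ s in (0:ℝ)..(t-a), Real.cosh (c * (s - 0)) * iterInt (fun u => Real.cosh (c * u)) n s (t - a)
    apply intervalIntegral.integral_congr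
    intro s _
    dsimp only
    rw [ih s (t - a), sub_zero]

lemma I_succ (c : ℝ) (n : ℕ) (x : ℝ) :
    I c (n+1) x = ∫ v in (0:ℝ)..x, Real.cosh (c * (x - v)) * I c n v := by
  have h0 : I c (n+1) x
      = ∫ s in (0:ℝ)..x, Real.cosh (c * s) * I c n (x - s) := by
    show (∫ s in (0:ℝ)..x, Real.cosh (c * (s - 0)) * iterInt (fun u => Real.cosh (c * u)) n s x) = _
    apply intervalIntegral.integral_congr
    intro s _
    dsimp only
    rw [iterInt_trans c n s x, sub_zero]
  rw [h0]
  have h2 := intervalIntegral.integral_comp_sub_left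
    (fun v => Real.cosh (c * (x - v)) * I c n v) x (a := (0:ℝ)) (b := x)
  simp only [sub_zero, sub_self] at h2
  rw [← h2]
  apply intervalIntegral.integral_congr
  intro s _
  dsimp only
  have : x - (x - s) = s := by ring
  rw [this]

/-- `A` primitive. -/
noncomputable def Aint (c : ℝ) (n : ℕ) (x : ℝ) : ℝ :=
  ∫ v in (0:ℝ)..x, Real.cosh (c * v) * I c n v

noncomputable def Bint (c : ℝ) (n : ℕ) (x : ℝ) : ℝ :=
  ∫ v in (0:ℝ)..x, Real.sinh (c * v) * I c n v

lemma contI (c : ℝ) : ∀ n, Continuous (I c n) := by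
  intro n
  induction n with
  | zero =>
    have : Continuous fun t => Real.cosh (c * t) :=
      Real.continuous_cosh.comp (continuous_const.mul continuous_id)
    simpa [funext fun t => I_zero c t] using this
  | succ n ih =>
    have hint : Continuous fun v => Real.cosh (c * v) * I c n v :=
      (Real.continuous_cosh.comp (continuous_const.mul continuous_id)).mul ih
    have hint2 : Continuous fun v => Real.sinh (c * v) * I c n v :=
      (Real.continuous_sinh.comp (continuous_const.mul continuous_id)).mul ih
    have hA : Continuous (Aint c n) := by
      rw [continuous_iff_continuousAt]
      intro x
      exact (hint.integral_hasStrictDerivAt 0 x).hasDerivAt.continuousAt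
    have hB : Continuous (Bint c n) := by
      rw [continuous_iff_continuousAt]
      intro x
      exact (hint2.integral_hasStrictDerivAt 0 x).hasDerivAt.continuousAt
    have hrep : ∀ x, I c (n+1) x
        = Real.cosh (c * x) * Aint c n x - Real.sinh (c * x) * Bint c n x := by
      intro x
      rw [I_succ]
      have hcong : ∀ v ∈ Set.uIcc (0:ℝ) x,
          Real.cosh (c * (x - v)) * I c n v
          = Real.cosh (c * x) * (Real.cosh (c * v) * I c n v)
            - Real.sinh (c * x) * (Real.sinh (c * v) * I c n v) := by
        intro v _
        have : c * (x - v) = c * x - c * v := by ring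
        rw [this, Real.cosh_sub]
        ring
      rw [intervalIntegral.integral_congr hcong,
        intervalIntegral.integral_sub
          (f := fun v => Real.cosh (c * x) * (Real.cosh (c * v) * I c n v))
          (g := fun v => Real.sinh (c * x) * (Real.sinh (c * v) * I c n v))
          ((continuous_const.mul hint).intervalIntegrable 0 x)
          ((continuous_const.mul hint2).intervalIntegrable 0 x),
        intervalIntegral.integral_const_mul, intervalIntegral.integral_const_mul]
      rfl
    have : Continuous fun x =>
        Real.cosh (c * x) * Aint c n x - Real.sinh (c * x) * Bint c n x :=
      ((Real.continuous_cosh.comp (continuous_const.mul continuous_id)).mul hA).sub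
        ((Real.continuous_sinh.comp (continuous_const.mul continuous_id)).mul hB)
    simpa [funext hrep] using this

lemma I_rep (c : ℝ) (n : ℕ) (x : ℝ) :
    I c (n+1) x = Real.cosh (c * x) * Aint c n x - Real.sinh (c * x) * Bint c n x := by
  rw [I_succ]
  have hint : Continuous fun v => Real.cosh (c * v) * I c n v :=
    (Real.continuous_cosh.comp (continuous_const.mul continuous_id)).mul (contI c n)
  have hint2 : Continuous fun v => Real.sinh (c * v) * I c n v :=
    (Real.continuous_sinh.comp (continuous_const.mul continuous_id)).mul (contI c n)
  have hcong : ∀ v ∈ Set.uIcc (0:ℝ) x,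
      Real.cosh (c * (x - v)) * I c n v
      = Real.cosh (c * x) * (Real.cosh (c * v) * I c n v)
        - Real.sinh (c * x) * (Real.sinh (c * v) * I c n v) := by
    intro v _
    have : c * (x - v) = c * x - c * v := by ring
    rw [this, Real.cosh_sub]
    ring
  rw [intervalIntegral.integral_congr hcong,
    intervalIntegral.integral_sub
      (f := fun v => Real.cosh (c * x) * (Real.cosh (c * v) * I c n v))
      (g := fun v => Real.sinh (c * x) * (Real.sinh (c * v) * I c n v))
      ((continuous_const.mul hint).intervalIntegrable 0 x)
      ((continuous_const.mul hint2).intervalIntegrable 0 x),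
    intervalIntegral.integral_const_mul, intervalIntegral.integral_const_mul]
  rfl

lemma hasDerivAt_Aint (c : ℝ) (n : ℕ) (x : ℝ) :
    HasDerivAt (Aint c n) (Real.cosh (c * x) * I c n x) x := by
  have hint : Continuous fun v => Real.cosh (c * v) * I c n v :=
    (Real.continuous_cosh.comp (continuous_const.mul continuous_id)).mul (contI c n)
  exact (hint.integral_hasStrictDerivAt 0 x).hasDerivAt

lemma hasDerivAt_Bint (c : ℝ) (n : ℕ) (x : ℝ) :
    HasDerivAt (Bint c n) (Real.sinh (c * x) * I c n x) x := by
  have hint : Continuous fun v => Real.sinh (c * v) * I c n v :=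
    (Real.continuous_sinh.comp (continuous_const.mul continuous_id)).mul (contI c n)
  exact (hint.integral_hasStrictDerivAt 0 x).hasDerivAt

/-- First derivative of `I c n`. -/
noncomputable def Dfun (c : ℝ) : ℕ → ℝ → ℝ
  | 0, x => c * Real.sinh (c * x)
  | n+1, x => I c n x + c * (Real.sinh (c * x) * Aint c n x - Real.cosh (c * x) * Bint c n x)

lemma hasDerivAt_cosh_c (c x : ℝ) :
    HasDerivAt (fun x => Real.cosh (c * x)) (c * Real.sinh (c * x)) x := by
  have h := (Real.hasDerivAt_cosh (c * x)).comp x ((hasDerivAt_id x).const_mul c)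
  simpa [mul_comm, Function.comp_def] using h

lemma hasDerivAt_sinh_c (c x : ℝ) :
    HasDerivAt (fun x => Real.sinh (c * x)) (c * Real.cosh (c * x)) x := by
  have h := (Real.hasDerivAt_sinh (c * x)).comp x ((hasDerivAt_id x).const_mul c)
  simpa [mul_comm, Function.comp_def] using h

lemma hasDerivAt_I (c : ℝ) : ∀ (n : ℕ) (x : ℝ), HasDerivAt (I c n) (Dfun c n x) x := by
  intro n
  induction n with
  | zero =>
    intro x
    have h := hasDerivAt_cosh_c c x
    show HasDerivAt (I c 0) (c * Real.sinh (c * x)) x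
    have he : I c 0 = fun x => Real.cosh (c * x) := funext fun t => I_zero c t
    rw [he]
    exact h
  | succ n ih =>
    intro x
    have he : I c (n+1) = fun x =>
        Real.cosh (c * x) * Aint c n x - Real.sinh (c * x) * Bint c n x :=
      funext fun t => I_rep c n t
    rw [he]
    have h1 := ((hasDerivAt_cosh_c c x).mul (hasDerivAt_Aint c n x)).sub
      ((hasDerivAt_sinh_c c x).mul (hasDerivAt_Bint c n x))
    have hval : c * Real.sinh (c * x) * Aint c n x
        + Real.cosh (c * x) * (Real.cosh (c * x) * I c n x)
        - (c * Real.cosh (c * x) * Bint c n x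
          + Real.sinh (c * x) * (Real.sinh (c * x) * I c n x))
        = Dfun c (n+1) x := by
      show _ = I c n x + c * (Real.sinh (c * x) * Aint c n x - Real.cosh (c * x) * Bint c n x)
      have hid : Real.cosh (c * x) ^ 2 - Real.sinh (c * x) ^ 2 = 1 :=
        Real.cosh_sq_sub_sinh_sq (c * x)
      linear_combination (I c n x) * hid
    rw [← hval]
    exact h1

lemma hasDerivAt_D (c : ℝ) (n : ℕ) (x : ℝ) :
    HasDerivAt (Dfun c (n+1)) (Dfun c n x + c^2 * I c (n+1) x) x := by
  have he : Dfun c (n+1) = fun x =>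
      I c n x + c * (Real.sinh (c * x) * Aint c n x - Real.cosh (c * x) * Bint c n x) := by
    funext y; rfl
  rw [he]
  have h1 := (hasDerivAt_I c n x).add
    ((((hasDerivAt_sinh_c c x).mul (hasDerivAt_Aint c n x)).sub
      ((hasDerivAt_cosh_c c x).mul (hasDerivAt_Bint c n x))).const_mul c)
  have hval : Dfun c n x
      + c * (c * Real.cosh (c * x) * Aint c n x
          + Real.sinh (c * x) * (Real.cosh (c * x) * I c n x)
          - (c * Real.sinh (c * x) * Bint c n x
            + Real.cosh (c * x) * (Real.sinh (c * x) * I c n x)))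
      = Dfun c n x + c^2 * I c (n+1) x := by
    rw [I_rep c n x]
    ring
  rw [← hval]
  exact h1

/-- for n ≥ 1 and t > 0, `I_n'' = I_{n-1}' + c² I_n`. -/
theorem iterCosh_ode (c : ℝ) (hc : 0 < c) (n : ℕ) (hn : 1 ≤ n) (t : ℝ) (ht : 0 < t) :
    deriv (deriv (I c n)) t = deriv (I c (n - 1)) t + c^2 * I c n t := by
  obtain ⟨m, rfl⟩ : ∃ m, n = m + 1 := ⟨n - 1, (Nat.succ_pred_eq_of_pos hn).symm⟩
  have h1 : deriv (I c (m+1)) = Dfun c (m+1) :=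
    funext fun x => (hasDerivAt_I c (m+1) x).deriv
  have h2 : deriv (I c m) t = Dfun c m t := (hasDerivAt_I c m t).deriv
  rw [h1, (hasDerivAt_D c m t).deriv]
  simp [h2]
end

section
/- For E_2(t) = (2/t²)∫₀ᵗ dt₁ ∫_{t₁}ᵗ dt₂ cosh(ct₁) cosh(c(t₂−t₁)) cosh(c(t−t₂)) one has E_2(t) = (1/4) cosh(ct) + (3/(4ct)) sinh(ct) for t > 0. -/
open Real MeasureTheory

private lemma hd_lin (a b x : ℝ) : HasDerivAt (fun y : ℝ => a * y + b) a x := by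
  simpa using ((hasDerivAt_id x).const_mul a).add_const b

private lemma hd_cosh (a b x : ℝ) :
    HasDerivAt (fun y : ℝ => Real.cosh (a * y + b)) (a * Real.sinh (a * x + b)) x := by
  simpa [mul_comm] using (hd_lin a b x).cosh

private lemma hd_sinh (a b x : ℝ) :
    HasDerivAt (fun y : ℝ => Real.sinh (a * y + b)) (a * Real.cosh (a * x + b)) x := by
  simpa [mul_comm] using (hd_lin a b x).sinh

/-- `E₂(t) = (2/t²)∫₀ᵗ dt₁ ∫_{t₁}ᵗ dt₂ cosh(ct₁)cosh(c(t₂-t₁))cosh(c(t-t₂))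
                         = (1/4)cosh(ct) + (3/(4ct)) sinh(ct)`. -/
theorem conditional_mean_two_changes (c t : ℝ) (hc : 0 < c) (ht : 0 < t) :
    (2 / t ^ 2) * ∫ t₁ in (0:ℝ)..t, ∫ t₂ in t₁..t,
        Real.cosh (c * t₁) * Real.cosh (c * (t₂ - t₁)) * Real.cosh (c * (t - t₂))
      = (1 / 4) * Real.cosh (c * t) + (3 / (4 * c * t)) * Real.sinh (c * t) := by
  have hc' : c ≠ 0 := hc.ne'
  have ht' : t ≠ 0 := ht.ne'
  -- inner integral
  have inner : ∀ t₁ : ℝ, (∫ t₂ in t₁..t,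
      Real.cosh (c * t₁) * Real.cosh (c * (t₂ - t₁)) * Real.cosh (c * (t - t₂)))
      = Real.cosh (c * t₁) * ((t - t₁) / 2 * Real.cosh (c * (t - t₁))
          + Real.sinh (c * (t - t₁)) / (2 * c)) := by
    intro t₁
    have key : ∀ x : ℝ, HasDerivAt
        (fun y : ℝ => Real.cosh (c * t₁) * (y / 2 * Real.cosh (c * (t - t₁))
          + Real.sinh (2 * c * y + (-(c * t) - c * t₁)) / (4 * c)))
        (Real.cosh (c * t₁) * Real.cosh (c * (x - t₁)) * Real.cosh (c * (t - x))) x := by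
      intro x
      have h1 : HasDerivAt (fun y : ℝ => y / 2 * Real.cosh (c * (t - t₁)))
          (Real.cosh (c * (t - t₁)) / 2) x := by
        have := ((hasDerivAt_id x).div_const 2).mul_const (Real.cosh (c * (t - t₁)))
        convert this using 1
        · rfl
        · rfl
        · rfl
        ring
      have h2 := (hd_sinh (2 * c) (-(c * t) - c * t₁) x).div_const (4 * c)
      have h3 := ((h1.add h2).const_mul (Real.cosh (c * t₁)))
      convert h3 using 1
      · rfl
      · rfl
      · rfl
      have e1 : c * (t - t₁) = c * (x - t₁) + c * (t - x) := by ring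
      have e2 : 2 * c * x + (-(c * t) - c * t₁) = c * (x - t₁) - c * (t - x) := by ring
      rw [e1, e2, Real.cosh_add, Real.cosh_sub]
      field_simp
      ring
    have cont : Continuous (fun t₂ : ℝ =>
        Real.cosh (c * t₁) * Real.cosh (c * (t₂ - t₁)) * Real.cosh (c * (t - t₂))) := by
      fun_prop
    rw [intervalIntegral.integral_eq_sub_of_hasDerivAt (fun x _ => key x)
      (cont.intervalIntegrable _ _)]
    have e3 : 2 * c * t + (-(c * t) - c * t₁) = c * (t - t₁) := by ring
    have e4 : 2 * c * t₁ + (-(c * t) - c * t₁) = -(c * (t - t₁)) := by ring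
    rw [e3, e4, Real.sinh_neg]
    field_simp
    ring
  simp_rw [inner]
  -- outer integral
  have key2 : ∀ x : ℝ, HasDerivAt
      (fun x : ℝ => Real.cosh (c * t) * (t * x - x ^ 2 / 2) / 4
        + (t - x) * Real.sinh (2 * c * x + -(c * t)) / (8 * c)
        + x * Real.sinh (c * t) / (4 * c)
        - Real.cosh (2 * c * x + -(c * t)) / (16 * c ^ 2))
      (Real.cosh (c * x) * ((t - x) / 2 * Real.cosh (c * (t - x))
        + Real.sinh (c * (t - x)) / (2 * c))) x := by
    intro x
    have h1 : HasDerivAt (fun x : ℝ => Real.cosh (c * t) * (t * x - x ^ 2 / 2) / 4)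
        (Real.cosh (c * t) * (t - x) / 4) x := by
      have : HasDerivAt (fun x : ℝ => t * x - x ^ 2 / 2) (t - x) x := by
        have ha : HasDerivAt (fun x : ℝ => t * x) t x := by
          simpa using (hasDerivAt_id x).const_mul t
        have hb : HasDerivAt (fun x : ℝ => x ^ 2 / 2) x x := by
          simpa using (hasDerivAt_pow 2 x).div_const 2
        exact ha.sub hb
      simpa [mul_div_assoc] using (this.const_mul (Real.cosh (c * t))).div_const 4
    have h2 : HasDerivAt (fun x : ℝ => (t - x) * Real.sinh (2 * c * x + -(c * t)) / (8 * c))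
        (((-1) * Real.sinh (2 * c * x + -(c * t))
          + (t - x) * (2 * c * Real.cosh (2 * c * x + -(c * t)))) / (8 * c)) x := by
      have ha : HasDerivAt (fun x : ℝ => t - x) (-1) x := by
        simpa using (hasDerivAt_id x).const_sub t
      exact (ha.mul (hd_sinh (2 * c) (-(c * t)) x)).div_const (8 * c)
    have h3 : HasDerivAt (fun x : ℝ => x * Real.sinh (c * t) / (4 * c))
        (Real.sinh (c * t) / (4 * c)) x := by
      simpa [mul_div_assoc] using ((hasDerivAt_id x).mul_const (Real.sinh (c * t))).div_const (4 * c)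
    have h4 : HasDerivAt (fun x : ℝ => Real.cosh (2 * c * x + -(c * t)) / (16 * c ^ 2))
        (2 * c * Real.sinh (2 * c * x + -(c * t)) / (16 * c ^ 2)) x := by
      exact (hd_cosh (2 * c) (-(c * t)) x).div_const (16 * c ^ 2)
    have h5 := ((h1.add h2).add h3).sub h4
    convert h5 using 1
    · rfl
    · rfl
    · rfl
    have e1 : c * (t - x) = c * t - c * x := by ring
    have e2 : (2 : ℝ) * c * x + -(c * t) = c * x - (c * t - c * x) := by ring
    have pyth : Real.cosh (c * x) ^ 2 - Real.sinh (c * x) ^ 2 = 1 := Real.cosh_sq_sub_sinh_sq _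
    rw [e1, e2]
    simp only [Real.cosh_sub, Real.sinh_sub, Real.cosh_add, Real.sinh_add]
    field_simp
    linear_combination (256 * Real.sinh (c * t)
      + 256 * c * (t - x) * Real.cosh (c * t)) * pyth
  have cont2 : Continuous (fun t₁ : ℝ => Real.cosh (c * t₁) * ((t - t₁) / 2 * Real.cosh (c * (t - t₁))
      + Real.sinh (c * (t - t₁)) / (2 * c))) := by fun_prop
  rw [intervalIntegral.integral_eq_sub_of_hasDerivAt (fun x _ => key2 x)
    (cont2.intervalIntegrable _ _)]
  have e5 : 2 * c * t + -(c * t) = c * t := by ring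
  have e6 : 2 * c * 0 + -(c * t) = -(c * t) := by ring
  rw [e5, e6, Real.sinh_neg, Real.cosh_neg]
  field_simp
  ring
end

section
/- The generating function G(s,t) = ∑_{n=0}^∞ sⁿ J_n(t), where J_n are the simplex integrals of products of hyperbolic sines (J₀(t)=sinh(ct)), equals G(s,t) = √(c/(s+c)) · sinh(t√(c(s+c))) for s > 0, t ≥ 0. -/
open Real MeasureTheory

/-- `J_n(t)`: simplex integral of products of hyperbolic sines of increments. -/
noncomputable def J (c : ℝ) (n : ℕ) (t : ℝ) : ℝ :=
  iterInt (fun u => Real.sinh (c * u)) n 0 t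

set_option maxHeartbeats 1000000

namespace GenFn

open Nat Finset

lemma summable_odd_div (x : ℝ) :
    Summable (fun m : ℕ => x ^ (2*m+1) / ((2*m+1)! : ℝ)) := by
  have hinj : Function.Injective (fun m : ℕ => 2*m+1) := by
    intro a b hab
    simp only at hab
    omega
  have h := (Real.summable_pow_div_factorial x).comp_injective hinj
  exact h

lemma sinh_series (x : ℝ) : Real.sinh x = ∑' m : ℕ, x ^ (2*m+1) / ((2*m+1)! : ℝ) := by
  have hexp : ∀ y : ℝ, Real.exp y = ∑' n : ℕ, y ^ n / (n ! : ℝ) := by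
    intro y
    rw [Real.exp_eq_exp_ℝ, NormedSpace.exp_eq_tsum_div]
  have hs : ∀ y : ℝ, Summable (fun n : ℕ => y ^ n / (n ! : ℝ)) :=
    Real.summable_pow_div_factorial
  set g : ℕ → ℝ := fun n => (x ^ n / (n ! : ℝ) - (-x) ^ n / (n ! : ℝ)) / 2 with hg
  have key : Real.sinh x = ∑' n : ℕ, g n := by
    rw [Real.sinh_eq, hexp x, hexp (-x), ← Summable.tsum_sub (hs x) (hs (-x)), tsum_div_const]
  have h0even : (fun k : ℕ => g (2*k)) = fun _ : ℕ => (0:ℝ) := by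
    funext k
    simp only [hg]
    rw [(even_two_mul k).neg_pow]
    ring
  have hoeq : (fun k : ℕ => g (2*k+1)) = fun k : ℕ => x ^ (2*k+1) / ((2*k+1)! : ℝ) := by
    funext k
    simp only [hg]
    rw [(odd_two_mul_add_one k).neg_pow]
    ring
  have he : Summable (fun k : ℕ => g (2*k)) := by rw [h0even]; exact summable_zero
  have ho : Summable (fun k : ℕ => g (2*k+1)) := by rw [hoeq]; exact summable_odd_div x
  calc Real.sinh x = ∑' n : ℕ, g n := key
    _ = (∑' k : ℕ, g (2*k)) + ∑' k : ℕ, g (2*k+1) := (tsum_even_add_odd he ho).symm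
    _ = ∑' k : ℕ, x ^ (2*k+1) / ((2*k+1)! : ℝ) := by
        rw [h0even, hoeq, tsum_zero, zero_add]

lemma sum_range_choose' (n M : ℕ) :
    ∑ m ∈ Finset.range (M+1), m.choose n = (M+1).choose (n+1) := by
  induction M with
  | zero => simp [Nat.choose_succ_succ]
  | succ M ih =>
      rw [Finset.sum_range_succ, ih]
      have h := Nat.choose_succ_succ (M+1) n
      simp only [Nat.succ_eq_add_one] at h ⊢
      omega

lemma choose_le_two_pow (m n : ℕ) : m.choose n ≤ 2 ^ m := by
  rcases le_or_gt m n with h | h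
  · rcases eq_or_lt_of_le h with rfl | h'
    · simpa using Nat.one_le_two_pow
    · simp [Nat.choose_eq_zero_of_lt h']
  · calc m.choose n ≤ ∑ k ∈ Finset.range (m+1), m.choose k :=
        Finset.single_le_sum (fun _ _ => Nat.zero_le _) (Finset.mem_range.2 (by omega))
      _ = 2 ^ m := Nat.sum_range_choose m

lemma beta_integral (a b : ℕ) (t : ℝ) :
    ∫ u in (0:ℝ)..t, u ^ a * (t - u) ^ b
      = (a ! : ℝ) * (b ! : ℝ) / (((a + b + 1)! : ℝ)) * t ^ (a + b + 1) := by
  induction a generalizing b with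
  | zero =>
      simp only [pow_zero, one_mul, Nat.zero_add, Nat.factorial_zero, Nat.cast_one]
      have h : ∫ x in (0:ℝ)..t, (t - x) ^ b = ∫ x in (0:ℝ)..t, x ^ b := by
        have h2 := intervalIntegral.integral_comp_sub_left (a := 0) (b := t)
          (fun u : ℝ => u ^ b) t
        simpa using h2
      rw [h, integral_pow, Nat.factorial_succ]
      have hb : ((b ! : ℝ)) ≠ 0 := by positivity
      push_cast
      field_simp
      ring
  | succ a ih =>
      have hu : ∀ x ∈ Set.uIcc (0:ℝ) t,
          HasDerivAt (fun x : ℝ => x ^ (a+1)) (((a:ℝ)+1) * x ^ a) x := by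
        intro x _
        simpa using hasDerivAt_pow (a+1) x
      have hv : ∀ x ∈ Set.uIcc (0:ℝ) t,
          HasDerivAt (fun x : ℝ => -(t - x) ^ (b+1) / ((b:ℝ)+1)) ((t - x) ^ b) x := by
        intro x _
        have h1 : HasDerivAt (fun x : ℝ => t - x) (-1) x := (hasDerivAt_id x).const_sub t
        have h2 := (h1.pow (b+1)).neg.div_const ((b:ℝ)+1)
        refine h2.congr_deriv ?_
        simp only [Nat.add_sub_cancel]
        have hb : ((b:ℝ)+1) ≠ 0 := by positivity
        push_cast
        field_simp
      have hint1 : IntervalIntegrable (fun x : ℝ => ((a:ℝ)+1) * x ^ a) volume 0 t :=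
        (continuous_const.mul (continuous_pow a)).intervalIntegrable 0 t
      have hint2 : IntervalIntegrable (fun x : ℝ => (t - x) ^ b) volume 0 t :=
        ((continuous_const.sub continuous_id).pow b).intervalIntegrable 0 t
      rw [intervalIntegral.integral_mul_deriv_eq_deriv_mul hu hv hint1 hint2]
      have hre : (fun x : ℝ => ((a:ℝ)+1) * x ^ a * (-(t - x) ^ (b+1) / ((b:ℝ)+1)))
          = fun x : ℝ => (-(((a:ℝ)+1) / ((b:ℝ)+1))) * (x ^ a * (t - x) ^ (b+1)) := by
        funext x; ring
      rw [hre, intervalIntegral.integral_const_mul, ih (b+1)]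
      simp only [sub_self, sub_zero]
      rw [zero_pow (Nat.succ_ne_zero b), zero_pow (Nat.succ_ne_zero a)]
      have hfa : (((a+1)! : ℕ) : ℝ) = ((a:ℝ)+1) * (a ! : ℝ) := by
        rw [Nat.factorial_succ]; push_cast; ring
      have hfb : (((b+1)! : ℕ) : ℝ) = ((b:ℝ)+1) * (b ! : ℝ) := by
        rw [Nat.factorial_succ]; push_cast; ring
      have hidx1 : a + (b+1) + 1 = a + b + 2 := by ring
      have hidx2 : (a+1) + b + 1 = a + b + 2 := by ring
      rw [hidx1, hidx2, hfa, hfb]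
      have h1 : ((a:ℝ)+1) ≠ 0 := by positivity
      have h2 : ((b:ℝ)+1) ≠ 0 := by positivity
      have h3 : ((a ! : ℝ)) ≠ 0 := by positivity
      have h4 : ((b ! : ℝ)) ≠ 0 := by positivity
      have h5 : (((a+b+2)! : ℝ)) ≠ 0 := by positivity
      field_simp
      ring


lemma iterInt_shift (f : ℝ → ℝ) : ∀ (n : ℕ) (a t : ℝ), iterInt f n a t = iterInt f n 0 (t - a) := by
  intro n
  induction n with
  | zero => intro a t; simp [iterInt]
  | succ n ih =>
      intro a t
      show (∫ s in a..t, f (s - a) * iterInt f n s t)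
          = ∫ s in (0:ℝ)..(t-a), f (s - 0) * iterInt f n s (t-a)
      have h1 : (∫ s in (0:ℝ)..(t-a), f (s - 0) * iterInt f n s (t-a))
          = ∫ s in (0:ℝ)..(t-a), f s * iterInt f n 0 (t - a - s) := by
        congr 1
        funext s
        rw [ih s (t-a), sub_zero]
      have h2 : (∫ s in a..t, f (s - a) * iterInt f n s t)
          = ∫ s in a..t, f (s - a) * iterInt f n 0 (t - s) := by
        congr 1
        funext s
        rw [ih s t]
      rw [h1, h2]
      have h3 := intervalIntegral.integral_comp_add_right
        (a := 0) (b := t - a) (fun s => f (s - a) * iterInt f n 0 (t - s)) a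
      simp only [zero_add, sub_add_cancel] at h3
      rw [← h3]
      congr 1
      funext s
      rw [add_sub_cancel_right]
      congr 2
      ring

lemma J_succ (c : ℝ) (n : ℕ) (t : ℝ) :
    J c (n+1) t = ∫ u in (0:ℝ)..t, Real.sinh (c*u) * J c n (t-u) := by
  show (∫ s in (0:ℝ)..t, Real.sinh (c * (s - 0)) * iterInt (fun u => Real.sinh (c*u)) n s t) = _
  congr 1
  funext s
  rw [iterInt_shift, sub_zero]
  rfl

/-- coefficient of `t^(2m+1)` in `J c n`. -/
noncomputable def A (c : ℝ) (n m : ℕ) : ℝ :=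
  (m.choose n : ℝ) * c ^ (2*m+1) / (c ^ n * ((2*m+1)! : ℝ))

lemma A_nonneg {c : ℝ} (hc : 0 < c) (n m : ℕ) : 0 ≤ A c n m := by
  unfold A; positivity

lemma abs_A {c : ℝ} (hc : 0 < c) (n m : ℕ) : |A c n m| = A c n m :=
  abs_of_nonneg (A_nonneg hc n m)

lemma A_le {c : ℝ} (hc : 0 < c) (n m : ℕ) :
    A c n m ≤ (2:ℝ) ^ m * c ^ (2*m+1) / (c ^ n * (m ! : ℝ)) := by
  unfold A
  have hch : (m.choose n : ℝ) ≤ 2 ^ m := by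
    have h1 : m.choose n ≤ 2 ^ m := by
      rcases le_or_gt m n with h | h
      · rcases eq_or_lt_of_le h with rfl | h'
        · simpa using Nat.one_le_two_pow
        · simp [Nat.choose_eq_zero_of_lt h']
      · calc m.choose n ≤ ∑ k ∈ Finset.range (m+1), m.choose k :=
            Finset.single_le_sum (fun _ _ => Nat.zero_le _) (Finset.mem_range.2 (by omega))
          _ = 2 ^ m := Nat.sum_range_choose m
    exact_mod_cast h1
  gcongr
  omega

lemma summable_A_abs {c : ℝ} (hc : 0 < c) (n : ℕ) (x : ℝ) :
    Summable (fun m : ℕ => |A c n m * x ^ (2*m+1)|) := by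
  refine Summable.of_nonneg_of_le
    (f := fun m : ℕ => (c * |x|) / c ^ n * ((2 * (c*|x|)^2) ^ m / (m ! : ℝ)))
    (fun m => abs_nonneg _) (fun m => ?_)
    ((Real.summable_pow_div_factorial (2 * (c*|x|)^2)).mul_left _)
  · rw [abs_mul, abs_A hc, abs_pow]
    calc A c n m * |x| ^ (2*m+1)
        ≤ (2:ℝ) ^ m * c ^ (2*m+1) / (c ^ n * (m ! : ℝ)) * |x| ^ (2*m+1) := by
          gcongr
          exact A_le hc n m
      _ = (c * |x|) / c ^ n * ((2 * (c*|x|)^2) ^ m / (m ! : ℝ)) := by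
          rw [mul_pow, mul_pow, mul_pow]
          ring

lemma summable_A {c : ℝ} (hc : 0 < c) (n : ℕ) (x : ℝ) :
    Summable (fun m : ℕ => A c n m * x ^ (2*m+1)) :=
  (summable_A_abs hc n x).of_abs


def sigmaEquiv : (Σ M : ℕ, Fin (M+1)) ≃ ℕ × ℕ where
  toFun p := (p.1 - (p.2 : ℕ), (p.2 : ℕ))
  invFun q := ⟨q.1 + q.2, ⟨q.2, by omega⟩⟩
  left_inv := by
    rintro ⟨M, k⟩
    have hk : (k : ℕ) ≤ M := Nat.lt_succ_iff.1 k.isLt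
    have h : M - (k : ℕ) + (k : ℕ) = M := by omega
    dsimp only
    exact Sigma.ext h ((Fin.heq_ext_iff (by simp; omega)).2 rfl)
  right_inv := by
    rintro ⟨j, m⟩
    simp

lemma tsum_prod_regroup (F : ℕ × ℕ → ℝ) (hF : Summable F) :
    ∑' p : ℕ × ℕ, F p = ∑' M : ℕ, ∑ k ∈ Finset.range (M+1), F (M - k, k) := by
  have hs : Summable (fun x : (Σ M : ℕ, Fin (M+1)) => F (sigmaEquiv x)) := by
    have := (Equiv.summable_iff sigmaEquiv (f := F)).2 hF
    exact this
  rw [← sigmaEquiv.tsum_eq F, Summable.tsum_sigma hs]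
  apply tsum_congr
  intro M
  rw [tsum_fintype]
  exact Fin.sum_univ_eq_sum_range (fun k => F (M - k, k)) (M+1)

lemma J_eq {c : ℝ} (hc : 0 < c) :
    ∀ (n : ℕ) (t : ℝ), 0 ≤ t → J c n t = ∑' m : ℕ, A c n m * t ^ (2*m+1) := by
  intro n
  induction n with
  | zero =>
      intro t ht
      have h0 : J c 0 t = Real.sinh (c * t) := by
        simp [J, iterInt]
      rw [h0, sinh_series (c*t)]
      apply tsum_congr
      intro m
      simp only [A, Nat.choose_zero_right, Nat.cast_one, pow_zero, one_mul, mul_pow]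
      ring
  | succ n ih =>
      intro t ht
      set g : ℕ × ℕ → ℝ → ℝ := fun p u =>
        (c*u) ^ (2*p.1+1) / (((2*p.1+1)! : ℕ) : ℝ) * (A c n p.2 * (t-u) ^ (2*p.2+1)) with hgdef
      set D : ℕ × ℕ → ℝ := fun p =>
        (p.2.choose n : ℝ) * c ^ (2*(p.1+p.2)+2) * t ^ (2*(p.1+p.2)+3)
          / (c ^ n * (((2*(p.1+p.2)+3)! : ℕ) : ℝ)) with hDdef
      have hpoint : ∀ u ∈ Set.Ioc (0:ℝ) t,
          Real.sinh (c*u) * J c n (t-u) = ∑' p : ℕ × ℕ, g p u := by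
        intro u hu
        have htu : 0 ≤ t - u := by linarith [hu.2]
        simp only [hgdef]
        rw [ih (t-u) htu, sinh_series (c*u)]
        have hf : Summable (fun j : ℕ => ‖(c*u) ^ (2*j+1) / (((2*j+1)! : ℕ) : ℝ)‖) := by
          have hh : (fun j : ℕ => ‖(c*u) ^ (2*j+1) / (((2*j+1)! : ℕ) : ℝ)‖)
              = fun j : ℕ => |c*u| ^ (2*j+1) / (((2*j+1)! : ℕ) : ℝ) := by
            funext j
            rw [Real.norm_eq_abs, abs_div, abs_pow, Nat.abs_cast]
          rw [hh]
          exact summable_odd_div _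
        have hg2 : Summable (fun m : ℕ => ‖A c n m * (t-u) ^ (2*m+1)‖) := by
          simp only [Real.norm_eq_abs]
          exact summable_A_abs hc n (t-u)
        exact tsum_mul_tsum_of_summable_norm hf hg2
      have hcont : ∀ p : ℕ × ℕ, Continuous (g p) := by
        intro p
        simp only [hgdef]
        apply Continuous.mul
        · exact ((continuous_const.mul continuous_id).pow _).div_const _
        · exact continuous_const.mul ((continuous_const.sub continuous_id).pow _)
      have hint : ∀ p : ℕ × ℕ, Integrable (g p) (volume.restrict (Set.Ioc 0 t)) := by
        intro p
        exact ((hcont p).integrableOn_Icc (a := 0) (b := t)).mono_set Set.Ioc_subset_Icc_self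
      have hval : ∀ p : ℕ × ℕ, (∫ u in Set.Ioc (0:ℝ) t, g p u) = D p := by
        rintro ⟨j, m⟩
        rw [← intervalIntegral.integral_of_le ht]
        have hre : (fun u : ℝ => g (j, m) u)
            = fun u : ℝ => (c ^ (2*j+1) / (((2*j+1)! : ℕ) : ℝ) * A c n m)
                * (u ^ (2*j+1) * (t-u) ^ (2*m+1)) := by
          funext u
          simp only [hgdef, mul_pow]
          ring
        calc ∫ u in (0:ℝ)..t, g (j, m) u
            = ∫ u in (0:ℝ)..t, (c ^ (2*j+1) / (((2*j+1)! : ℕ) : ℝ) * A c n m)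
                * (u ^ (2*j+1) * (t-u) ^ (2*m+1)) := by rw [hre]
          _ = (c ^ (2*j+1) / (((2*j+1)! : ℕ) : ℝ) * A c n m)
                * ∫ u in (0:ℝ)..t, u ^ (2*j+1) * (t-u) ^ (2*m+1) :=
              intervalIntegral.integral_const_mul _ _
          _ = D (j, m) := by
              rw [beta_integral]
              simp only [hDdef, A]
              have hidx : (2*j+1) + (2*m+1) + 1 = 2*(j+m)+3 := by ring
              rw [hidx]
              have e1 : (((2*j+1)! : ℕ) : ℝ) ≠ 0 := by positivity
              have e2 : (((2*m+1)! : ℕ) : ℝ) ≠ 0 := by positivity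
              have e3 : (((2*(j+m)+3)! : ℕ) : ℝ) ≠ 0 := by positivity
              have e4 : c ^ n ≠ 0 := by positivity
              field_simp
              ring
      have hct : (0:ℝ) ≤ c * t := mul_nonneg hc.le ht
      have hDsum : Summable D := by
        have hfj : Summable (fun j : ℕ => (c*t) ^ (2*j+1) / (j ! : ℝ)) := by
          have hh : ∀ j : ℕ, (c*t) * (((c*t)^2) ^ j / (j ! : ℝ)) = (c*t) ^ (2*j+1) / (j ! : ℝ) := by
            intro j; conv_rhs => rw [show 2*j+1 = j*2+1 from by ring, pow_succ, pow_mul]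
            ring
          exact ((Real.summable_pow_div_factorial ((c*t)^2)).mul_left (c*t)).congr hh
        have hgm : Summable (fun m : ℕ => (2:ℝ)^m * (c*t)^(2*m+1) * t / (c ^ n * (m ! : ℝ))) := by
          have hh : ∀ m : ℕ, ((c*t) * t / c ^ n) * ((2*(c*t)^2) ^ m / (m ! : ℝ))
              = (2:ℝ)^m * (c*t)^(2*m+1) * t / (c ^ n * (m ! : ℝ)) := by
            intro m; conv_rhs => rw [show 2*m+1 = m*2+1 from by ring, pow_succ, pow_mul]
            rw [mul_pow]
            ring
          exact ((Real.summable_pow_div_factorial (2*(c*t)^2)).mul_left ((c*t) * t / c ^ n)).congr hh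
        have hprod : Summable (fun p : ℕ × ℕ =>
            ((c*t) ^ (2*p.1+1) / ((p.1)! : ℝ))
              * ((2:ℝ)^p.2 * (c*t)^(2*p.2+1) * t / (c ^ n * ((p.2)! : ℝ)))) :=
          hfj.mul_of_nonneg hgm
            (fun j => div_nonneg (pow_nonneg hct _) (Nat.cast_nonneg _))
            (fun m => by positivity)
        refine Summable.of_nonneg_of_le (fun p => ?_) (fun p => ?_) hprod
        · simp only [hDdef]; positivity
        · rcases p with ⟨j, m⟩
          simp only [hDdef]
          have heq : ((c*t) ^ (2*j+1) / ((j)! : ℝ))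
              * ((2:ℝ)^m * (c*t)^(2*m+1) * t / (c ^ n * ((m)! : ℝ)))
              = (2:ℝ)^m * c ^ (2*(j+m)+2) * t ^ (2*(j+m)+3)
                / (c ^ n * (((j)! : ℝ) * ((m)! : ℝ))) := by
            rw [mul_pow, mul_pow]
            have e1 : ((j)! : ℝ) ≠ 0 := by positivity
            have e2 : ((m)! : ℝ) ≠ 0 := by positivity
            have e4 : c ^ n ≠ 0 := by positivity
            field_simp
            ring
          rw [heq]
          have hfac : ((j)! * (m)! : ℕ) ≤ (2*(j+m)+3)! :=
            le_trans (Nat.le_of_dvd (Nat.factorial_pos _)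
              (Nat.factorial_mul_factorial_dvd_factorial_add j m))
              (Nat.factorial_le (by omega))
          have hch : (m.choose n : ℝ) ≤ (2:ℝ)^m := by exact_mod_cast choose_le_two_pow m n
          gcongr
          exact_mod_cast hfac
      have hnorm : ∀ p : ℕ × ℕ, (∫ u in Set.Ioc (0:ℝ) t, ‖g p u‖) = D p := by
        intro p
        rw [← hval p]
        apply setIntegral_congr_fun measurableSet_Ioc
        intro u hu
        have h2 : 0 ≤ c * u := mul_nonneg hc.le hu.1.le
        have h3 : 0 ≤ t - u := sub_nonneg.2 hu.2
        have h4 := A_nonneg hc n p.2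
        have h1 : 0 ≤ g p u := by
          simp only [hgdef]
          positivity
        exact norm_of_nonneg h1
      have hswap := integral_tsum_of_summable_integral_norm hint
        (hDsum.congr (fun p => (hnorm p).symm))
      have hAgrouped : ∑' m : ℕ, A c (n+1) m * t ^ (2*m+1)
          = ∑' M : ℕ, ((M+1).choose (n+1) : ℝ) * c ^ (2*M+2) * t ^ (2*M+3)
            / (c ^ n * (((2*M+3)! : ℕ) : ℝ)) := by
        rw [Summable.tsum_eq_zero_add (summable_A hc (n+1) t)]
        rw [show A c (n+1) 0 * t ^ (2*0+1) = 0 from by simp [A], zero_add]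
        apply tsum_congr
        intro M
        simp only [A]
        rw [show 2*(M+1)+1 = 2*M+3 from by ring]
        have e3 : (((2*M+3)! : ℕ) : ℝ) ≠ 0 := by positivity
        have e4 : c ≠ 0 := ne_of_gt hc
        field_simp
        ring
      calc J c (n+1) t
          = ∫ u in (0:ℝ)..t, Real.sinh (c*u) * J c n (t-u) := J_succ c n t
        _ = ∫ u in Set.Ioc (0:ℝ) t, Real.sinh (c*u) * J c n (t-u) :=
            intervalIntegral.integral_of_le ht
        _ = ∫ u in Set.Ioc (0:ℝ) t, ∑' p : ℕ × ℕ, g p u :=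
            setIntegral_congr_fun measurableSet_Ioc hpoint
        _ = ∑' p : ℕ × ℕ, ∫ u in Set.Ioc (0:ℝ) t, g p u := hswap.symm
        _ = ∑' p : ℕ × ℕ, D p := tsum_congr hval
        _ = ∑' M : ℕ, ∑ k ∈ Finset.range (M+1), D (M - k, k) := tsum_prod_regroup D hDsum
        _ = ∑' M : ℕ, ((M+1).choose (n+1) : ℝ) * c ^ (2*M+2) * t ^ (2*M+3)
              / (c ^ n * (((2*M+3)! : ℕ) : ℝ)) := by
            apply tsum_congr
            intro M
            have hterm : ∀ k ∈ Finset.range (M+1), D (M - k, k)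
                = (k.choose n : ℝ)
                  * (c ^ (2*M+2) * t ^ (2*M+3) / (c ^ n * (((2*M+3)! : ℕ) : ℝ))) := by
              intro k hk
              have hkM : k ≤ M := Nat.lt_succ_iff.1 (Finset.mem_range.1 hk)
              have h : M - k + k = M := by omega
              simp only [hDdef, h]
              ring
            rw [Finset.sum_congr rfl hterm, ← Finset.sum_mul]
            have hhs : (∑ k ∈ Finset.range (M+1), (k.choose n : ℝ)) = ((M+1).choose (n+1) : ℝ) := by
              rw [← sum_range_choose' n M]
              exact (Nat.cast_sum _ _).symm
            rw [hhs]
            ring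
        _ = ∑' m : ℕ, A c (n+1) m * t ^ (2*m+1) := hAgrouped.symm

end GenFn


open GenFn Nat in
/-- the generating function `G(s,t) = ∑ sⁿ J_n(t)` equals
`√(c/(s+c)) sinh(t√(c(s+c)))`. -/
theorem generating_function_sinh (c : ℝ) (hc : 0 < c) (s t : ℝ) (hs : 0 < s) (ht : 0 ≤ t) :
    ∑' n : ℕ, s ^ n * J c n t
      = Real.sqrt (c / (s + c)) * Real.sinh (t * Real.sqrt (c * (s + c))) := by
  have hsc : 0 < s + c := by linarith
  have hq : 0 < c * (s + c) := mul_pos hc hsc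
  set F : ℕ × ℕ → ℝ := fun p => s ^ p.2 * (A c p.2 p.1 * t ^ (2*p.1+1)) with hF
  have hzero : ∀ m k : ℕ, k ∉ Finset.range (m+1) → F (m, k) = 0 := by
    intro m k hk
    have h' : ¬ k < m + 1 := fun hlt => hk (Finset.mem_range.2 hlt)
    have hmk : m < k := by omega
    simp [hF, A, Nat.choose_eq_zero_of_lt hmk]
  have hrow : ∀ m : ℕ, Summable fun k => F (m, k) := by
    intro m
    exact summable_of_ne_finset_zero (s := Finset.range (m+1)) (hzero m)
  have hrowsum : ∀ m : ℕ, (∑' k, F (m, k))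
      = c * (c * (s+c)) ^ m * t ^ (2*m+1) / (((2*m+1)! : ℕ) : ℝ) := by
    intro m
    rw [tsum_eq_sum (hzero m)]
    have hterm : ∀ k ∈ Finset.range (m+1), F (m, k)
        = ((s/c)^k * (1:ℝ)^(m-k) * (m.choose k : ℝ))
          * (c ^ (2*m+1) * t ^ (2*m+1) / (((2*m+1)! : ℕ) : ℝ)) := by
      intro k hk
      simp only [hF, A, one_pow]
      rw [div_pow]
      have e1 : c ^ k ≠ 0 := by positivity
      have e2 : (((2*m+1)! : ℕ) : ℝ) ≠ 0 := by positivity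
      field_simp
    rw [Finset.sum_congr rfl hterm, ← Finset.sum_mul, ← add_pow]
    have h3 : (s/c + 1)^m = (s + 1*c)^m / c^m := by
      rw [div_add' _ _ _ (ne_of_gt hc), div_pow]
    rw [h3]
    have e3 : c ^ m ≠ 0 := by positivity
    have e2 : (((2*m+1)! : ℕ) : ℝ) ≠ 0 := by positivity
    rw [mul_pow]
    field_simp
    ring
  have hcol : Summable (fun m : ℕ =>
      c * (c * (s+c)) ^ m * t ^ (2*m+1) / (((2*m+1)! : ℕ) : ℝ)) := by
    refine Summable.of_nonneg_of_le (fun m => by positivity) (fun m => ?_)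
      ((Real.summable_pow_div_factorial (c*(s+c)*t^2)).mul_left (c*t))
    have hnum : c * (c*(s+c))^m * t^(2*m+1) = (c*t) * (c*(s+c)*t^2)^m := by
      have h4 : t ^ (2*m+1) = (t^2)^m * t := by
        rw [show 2*m+1 = m*2+1 from by ring, pow_succ, pow_mul']
      rw [h4, mul_pow, mul_pow, mul_pow]
      ring
    rw [hnum]
    have h5 : (c*t) * ((c*(s+c)*t^2)^m / ((m)! : ℝ))
        = ((c*t) * (c*(s+c)*t^2)^m) / ((m)! : ℝ) := by ring
    rw [h5]
    gcongr
    omega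
  have hF0 : 0 ≤ F := fun p => mul_nonneg (pow_nonneg hs.le _)
      (mul_nonneg (A_nonneg hc _ _) (pow_nonneg ht _))
  have hFsum : Summable F := (summable_prod_of_nonneg hF0).2
    ⟨hrow, hcol.congr (fun m => (hrowsum m).symm)⟩
  calc ∑' n : ℕ, s ^ n * J c n t
      = ∑' k : ℕ, ∑' m : ℕ, F (m, k) := by
        apply tsum_congr
        intro k
        rw [J_eq hc k t ht, ← tsum_mul_left]
    _ = ∑' m : ℕ, ∑' k : ℕ, F (m, k) := Summable.tsum_comm hFsum
    _ = ∑' m : ℕ, c * (c * (s+c)) ^ m * t ^ (2*m+1) / (((2*m+1)! : ℕ) : ℝ) :=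
        tsum_congr hrowsum
    _ = Real.sqrt (c / (s + c)) * Real.sinh (t * Real.sqrt (c * (s + c))) := by
        rw [sinh_series (t * Real.sqrt (c * (s+c))), ← tsum_mul_left]
        apply tsum_congr
        intro m
        have hsq : Real.sqrt (c*(s+c)) ^ (2*m+1) = (c*(s+c))^m * Real.sqrt (c*(s+c)) := by
          rw [show 2*m+1 = m*2+1 from by ring, pow_succ, pow_mul', Real.sq_sqrt hq.le]
        conv_rhs => rw [mul_pow, hsq]
        have h2 : Real.sqrt (c / (s+c)) * Real.sqrt (c * (s+c)) = c := by
          rw [← Real.sqrt_mul (by positivity) (c * (s+c)),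
            show c / (s+c) * (c * (s+c)) = c^2 from by field_simp]
          exact Real.sqrt_sq hc.le
        have h6 : Real.sqrt (c/(s+c))
              * ((t^(2*m+1) * ((c*(s+c))^m * Real.sqrt (c*(s+c)))) / (((2*m+1)! : ℕ) : ℝ))
            = (Real.sqrt (c/(s+c)) * Real.sqrt (c*(s+c)))
              * ((c*(s+c))^m * t^(2*m+1) / (((2*m+1)! : ℕ) : ℝ)) := by ring
        rw [h6, h2]
        ring
end

section
/- For n ≥ 0 and t > 0, J_n(t) = (t^{2n+1} c^{n+1}/n!) ∑_{r=0}^∞ ((n+r)!/r!) (ct)^{2r}/(2r+2n+1)!, where J_n(t) = ∫₀ᵗ dt₁ ⋯ ∫_{t_{n−1}}ᵗ dt_n ∏_{k=1}^{n+1} sinh(c(t_k−t_{k−1})) with t₀=0, t_{n+1}=t and J₀(t)=sinh(ct). -/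
set_option maxHeartbeats 1000000

open Real MeasureTheory

namespace IterSinhAux

lemma iterInt_shift (f : ℝ → ℝ) : ∀ (n : ℕ) (a t : ℝ), iterInt f n a t = iterInt f n 0 (t - a) := by
  intro n
  induction n with
  | zero => intro a t; simp [iterInt]
  | succ n ih =>
    intro a t
    have h1 : iterInt f (n+1) a t
        = ∫ s in a..t, (fun u => f u * iterInt f n 0 (t - a - u)) (s - a) := by
      show (∫ s in a..t, f (s - a) * iterInt f n s t) = _
      congr 1
      funext s
      simp only
      rw [ih s t, show t - a - (s - a) = t - s by ring]
    rw [h1, intervalIntegral.integral_comp_sub_right (fun u => f u * iterInt f n 0 (t - a - u)) a, sub_self]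
    show _ = ∫ s in (0:ℝ)..(t-a), f (s - 0) * iterInt f n s (t - a)
    congr 1
    funext s
    rw [ih s (t - a), sub_zero]

lemma J_succ (c : ℝ) (n : ℕ) (t : ℝ) :
    J c (n+1) t = ∫ s in (0:ℝ)..t, Real.sinh (c * s) * J c n (t - s) := by
  show (∫ s in (0:ℝ)..t, Real.sinh (c * (s - 0)) * iterInt (fun u => Real.sinh (c*u)) n s t) = _
  congr 1
  funext s
  rw [iterInt_shift _ n s t, sub_zero]
  rfl


/-- coefficient of `t^(2r+2n+1)` in `J_n`. -/
noncomputable def P (c : ℝ) (n r : ℕ) : ℝ :=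
  ((n+r).factorial : ℝ) / ((n.factorial : ℝ) * (r.factorial : ℝ)) * c ^ (2*r+n+1) /
    ((2*r+2*n+1).factorial : ℝ)

lemma P_nonneg {c : ℝ} (hc : 0 ≤ c) (n r : ℕ) : 0 ≤ P c n r := by
  unfold P; positivity

lemma summable_P {c : ℝ} (hc : 0 < c) (n : ℕ) {u : ℝ} (hu : 0 ≤ u) :
    Summable (fun r : ℕ => P c n r * u ^ (2*r+2*n+1)) := by
  refine Summable.of_nonneg_of_le
    (fun r => by have := P_nonneg hc.le n r; positivity) (fun r => ?_)
    (((Real.summable_pow_div_factorial (c^2*u^2)).mul_left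
      (c^(n+1) * u^(2*n+1) / (n.factorial : ℝ))))
  have hA : ((n+r).factorial : ℝ) / ((2*r+2*n+1).factorial : ℝ) ≤ 1 := by
    rw [div_le_one (by positivity)]
    exact_mod_cast Nat.factorial_le (by omega)
  calc P c n r * u ^ (2*r+2*n+1)
      = (((n+r).factorial : ℝ) / ((2*r+2*n+1).factorial : ℝ)) *
        (c^(n+1) * u^(2*n+1) * (c^2*u^2)^r / ((n.factorial : ℝ) * (r.factorial : ℝ))) := by
        unfold P; ring
    _ ≤ 1 * (c^(n+1) * u^(2*n+1) * (c^2*u^2)^r / ((n.factorial : ℝ) * (r.factorial : ℝ))) :=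
        mul_le_mul_of_nonneg_right hA (by positivity)
    _ = c^(n+1) * u^(2*n+1) / (n.factorial : ℝ) * ((c^2*u^2)^r / (r.factorial : ℝ)) := by ring

lemma summable_P_norm {c : ℝ} (hc : 0 < c) (n : ℕ) (u : ℝ) :
    Summable (fun r : ℕ => ‖P c n r * u ^ (2*r+2*n+1)‖) := by
  have h := summable_P hc n (abs_nonneg u)
  refine h.congr fun r => ?_
  rw [Real.norm_eq_abs, abs_mul, abs_of_nonneg (P_nonneg hc.le n r), abs_pow]

lemma summable_sinh_norm (x : ℝ) :
    Summable (fun k : ℕ => ‖x ^ (2*k+1) / ((2*k+1).factorial : ℝ)‖) := by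
  refine Summable.of_nonneg_of_le (fun k => norm_nonneg _) (fun k => ?_)
    ((Real.summable_pow_div_factorial (|x|^2)).mul_left |x|)
  have h1 : ‖x ^ (2*k+1) / ((2*k+1).factorial : ℝ)‖ = |x|^(2*k+1) / ((2*k+1).factorial : ℝ) := by
    rw [Real.norm_eq_abs, abs_div, abs_pow, Nat.abs_cast]
  rw [h1]
  have h2 : ((2*k+1).factorial : ℝ) ≥ (k.factorial : ℝ) := by
    exact_mod_cast Nat.factorial_le (by omega)
  calc |x|^(2*k+1) / ((2*k+1).factorial : ℝ)
      ≤ |x|^(2*k+1) / (k.factorial : ℝ) := by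
        apply div_le_div_of_nonneg_left _ _ h2 <;> first
          | positivity
          | exact_mod_cast Nat.factorial_pos k
    _ = |x| * ((|x|^2)^k / (k.factorial : ℝ)) := by ring
lemma beta_nat {t : ℝ} (ht : 0 ≤ t) : ∀ (b a : ℕ),
    (∫ s in (0:ℝ)..t, s^a * (t-s)^b) =
      (a.factorial : ℝ) * (b.factorial : ℝ) / ((a+b+1).factorial : ℝ) * t^(a+b+1) := by
  intro b
  induction b with
  | zero =>
    intro a
    simp only [pow_zero, mul_one, integral_pow, Nat.factorial_zero, Nat.cast_one,
      Nat.add_zero, Nat.factorial_succ]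
    rw [zero_pow (by omega)]
    have : ((a:ℝ)+1) ≠ 0 := by positivity
    push_cast
    field_simp
    ring
  | succ b ih =>
    intro a
    have hu : ∀ x ∈ Set.uIcc (0:ℝ) t, HasDerivAt (fun x => (t-x)^(b+1))
        (-((b+1 : ℝ) * (t-x)^b)) x := by
      intro x _
      have h := (((hasDerivAt_id x).const_sub t).pow (b+1))
      refine h.congr_deriv ?_
      push_cast
      simp [Nat.add_sub_cancel]
    have hv : ∀ x ∈ Set.uIcc (0:ℝ) t, HasDerivAt (fun x => x^(a+1)/((a:ℝ)+1))
        (x^a) x := by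
      intro x _
      have h := (hasDerivAt_pow (a+1) x).div_const ((a:ℝ)+1)
      refine h.congr_deriv ?_
      rw [show a+1-1 = a from rfl]
      have : ((a:ℝ)+1) ≠ 0 := by positivity
      push_cast
      field_simp
    have hiu : IntervalIntegrable (fun x => -((b+1 : ℝ) * (t-x)^b)) volume 0 t :=
      (Continuous.intervalIntegrable (by continuity) 0 t)
    have hiv : IntervalIntegrable (fun x : ℝ => x^a) volume 0 t :=
      (Continuous.intervalIntegrable (by continuity) 0 t)
    have parts := intervalIntegral.integral_mul_deriv_eq_deriv_mul hu hv hiu hiv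
    have e1 : (∫ s in (0:ℝ)..t, s^a * (t-s)^(b+1))
        = ∫ s in (0:ℝ)..t, (t-s)^(b+1) * s^a := by
      congr 1; funext s; ring
    have e2 : (∫ x in (0:ℝ)..t, -((b+1 : ℝ) * (t-x)^b) * (x^(a+1)/((a:ℝ)+1)))
        = (-((b+1 : ℝ)/((a:ℝ)+1))) * ∫ x in (0:ℝ)..t, x^(a+1) * (t-x)^b := by
      rw [← intervalIntegral.integral_const_mul]
      congr 1; funext x; ring
    rw [e1, parts, e2, ih (a+1)]
    have h1 : ((a:ℝ)+1) ≠ 0 := by positivity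
    have h2 : ((a+1).factorial : ℝ) = ((a:ℝ)+1) * (a.factorial : ℝ) := by
      rw [Nat.factorial_succ]; push_cast; ring
    have h3 : ((b+1).factorial : ℝ) = ((b:ℝ)+1) * (b.factorial : ℝ) := by
      rw [Nat.factorial_succ]; push_cast; ring
    have h4 : (a+1)+b+1 = a+(b+1)+1 := by omega
    have h5 : ((a+(b+1)+1).factorial : ℝ) ≠ 0 := by positivity
    rw [h4, h2, h3, sub_self, zero_pow (by omega : b+1 ≠ 0),
      zero_pow (by omega : a+1 ≠ 0)]
    field_simp
    ring

lemma hockey (n : ℕ) : ∀ R : ℕ, ∑ j ∈ Finset.range (R+1), (n+j).choose n = (n+R+1).choose (n+1) := by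
  intro R
  induction R with
  | zero => simp
  | succ R ih =>
    rw [Finset.sum_range_succ, ih, show n+(R+1)+1 = (n+R+1)+1 from by omega,
      Nat.choose_succ_succ (n+R+1) n, show n+(R+1) = n+R+1 from by omega,
      Nat.succ_eq_add_one]
    omega

lemma tsum_antidiag {F : ℕ × ℕ → ℝ} (h : Summable F) :
    ∑' p : ℕ × ℕ, F p = ∑' R, ∑ kl ∈ Finset.HasAntidiagonal.antidiagonal R, F kl := by
  conv_rhs => congr; ext; rw [← Finset.sum_finset_coe, ← tsum_fintype (L := SummationFilter.unconditional _)]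
  rw [← Finset.HasAntidiagonal.sigmaAntidiagonalEquivProd.tsum_eq F]
  exact (Finset.HasAntidiagonal.sigmaAntidiagonalEquivProd.summable_iff.mpr h).tsum_sigma'
    (fun n => (hasSum_fintype _).summable)


lemma J_eq (c : ℝ) (hc : 0 < c) : ∀ (n : ℕ) (t : ℝ), 0 ≤ t →
    J c n t = ∑' r : ℕ, P c n r * t ^ (2*r+2*n+1) := by
  intro n
  induction n with
  | zero =>
    intro t ht
    have h0 : J c 0 t = Real.sinh (c * t) := by
      simp [J, iterInt]
    rw [h0, Real.sinh_eq_tsum (c*t)]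
    refine tsum_congr fun r => ?_
    unfold P
    rw [mul_pow]
    have hr : (r.factorial : ℝ) ≠ 0 := by positivity
    have h1 : ((2*r+1).factorial : ℝ) ≠ 0 := by positivity
    simp only [Nat.zero_add, Nat.factorial_zero, Nat.cast_one, one_mul, Nat.mul_zero, Nat.add_zero]
    rw [show 2*r+2*0+1 = 2*r+1 from by omega, show 2*r+0+1 = 2*r+1 from by omega]
    rw [div_self hr]
    ring
  | succ n ih =>
    intro t ht
    have hct : (0:ℝ) ≤ c * t := by positivity
    have step1 : J c (n+1) t
        = ∫ s in (0:ℝ)..t, Real.sinh (c*s) * ∑' r : ℕ, P c n r * (t-s)^(2*r+2*n+1) := by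
      rw [J_succ]
      apply intervalIntegral.integral_congr
      intro s hs
      rw [Set.uIcc_of_le ht] at hs
      show Real.sinh (c*s) * J c n (t-s)
          = Real.sinh (c*s) * ∑' r : ℕ, P c n r * (t-s)^(2*r+2*n+1)
      rw [ih (t-s) (by linarith [hs.2])]
    set F : ℕ × ℕ → ℝ → ℝ := fun p s =>
      ((c*s) ^ (2*p.1+1) / ((2*p.1+1).factorial : ℝ)) * (P c n p.2 * (t-s)^(2*p.2+2*n+1)) with hF
    have step2 : ∀ s : ℝ, Real.sinh (c*s) * (∑' r : ℕ, P c n r * (t-s)^(2*r+2*n+1))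
        = ∑' p : ℕ × ℕ, F p s := by
      intro s
      rw [Real.sinh_eq_tsum (c*s)]
      exact tsum_mul_tsum_of_summable_norm (summable_sinh_norm (c*s)) (summable_P_norm hc n (t-s))
    have hFcont : ∀ p : ℕ × ℕ, Continuous (F p) := by
      intro p
      apply Continuous.mul
      · exact ((continuous_const.mul continuous_id).pow _).div_const _
      · exact continuous_const.mul ((continuous_const.sub continuous_id).pow _)
    have hFint : ∀ p : ℕ × ℕ, Integrable (F p) (volume.restrict (Set.Ioc 0 t)) := by
      intro p
      exact (hFcont p).integrableOn_Ioc
    set M : ℕ × ℕ → ℝ := fun p =>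
      ((c*t) ^ (2*p.1+1) / ((2*p.1+1).factorial : ℝ)) * (P c n p.2 * t^(2*p.2+2*n+1)) with hM
    have hMsum : Summable (fun p : ℕ × ℕ => M p * t) := by
      have h1 : Summable (fun k : ℕ => (c*t) ^ (2*k+1) / ((2*k+1).factorial : ℝ)) :=
        (summable_sinh_norm (c*t)).congr (fun k => by
          rw [Real.norm_eq_abs, abs_div, abs_pow, abs_of_nonneg hct, Nat.abs_cast])
      have hfg : Summable (fun p : ℕ × ℕ =>
          ((c*t) ^ (2*p.1+1) / ((2*p.1+1).factorial : ℝ)) *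
          (P c n p.2 * t ^ (2*p.2+2*n+1))) :=
        Summable.mul_of_nonneg h1 (summable_P hc n ht)
          (fun k => by positivity)
          (fun r => mul_nonneg (P_nonneg hc.le n r) (pow_nonneg ht _))
      exact (hfg.mul_right t).congr fun p => rfl
    have hnorm : ∀ (p : ℕ × ℕ), ∀ s ∈ Set.Ioc (0:ℝ) t, ‖F p s‖ ≤ M p := by
      intro p s hs
      have hs1 : 0 < s := hs.1
      have hs2 : s ≤ t := hs.2
      have h1 : (0:ℝ) ≤ t - s := by linarith
      have hP := P_nonneg hc.le n p.2
      have hnn : 0 ≤ F p s := by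
        apply mul_nonneg (div_nonneg (pow_nonneg (by positivity) _) (by positivity))
        exact mul_nonneg hP (pow_nonneg h1 _)
      rw [Real.norm_eq_abs, abs_of_nonneg hnn]
      simp only [hF, hM]
      gcongr <;> linarith
    have hsum : Summable (fun p : ℕ × ℕ => ∫ s in Set.Ioc (0:ℝ) t, ‖F p s‖) := by
      apply Summable.of_nonneg_of_le (fun p => integral_nonneg (fun s => norm_nonneg _)) _ hMsum
      intro p
      have hb := norm_setIntegral_le_of_norm_le_const (μ := volume) (s := Set.Ioc 0 t)
        (f := fun s => ‖F p s‖) (C := M p)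
        (by rw [Real.volume_Ioc]; exact ENNReal.ofReal_lt_top)
        (fun s hs => by rw [norm_norm]; exact hnorm p s hs)
      have hvol : volume.real (Set.Ioc (0:ℝ) t) = t := by
        rw [Real.volume_real_Ioc_of_le ht, sub_zero]
      rw [hvol] at hb
      exact le_trans (Real.le_norm_self _) hb
    have interchange : (∫ s in Set.Ioc (0:ℝ) t, ∑' p : ℕ × ℕ, F p s)
        = ∑' p : ℕ × ℕ, ∫ s in Set.Ioc (0:ℝ) t, F p s :=
      (integral_tsum_of_summable_integral_norm hFint hsum).symm
    set Q : ℕ × ℕ → ℝ := fun p => ((n+p.2).factorial : ℝ) /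
        ((n.factorial : ℝ) * (p.2.factorial : ℝ))
        * c ^ (2*(p.1+p.2)+n+2) * t ^ (2*(p.1+p.2)+2*n+3) /
        ((2*(p.1+p.2)+2*n+3).factorial : ℝ) with hQ
    have eval : ∀ p : ℕ × ℕ, (∫ s in Set.Ioc (0:ℝ) t, F p s) = Q p := by
      rintro ⟨k, r⟩
      rw [← intervalIntegral.integral_of_le ht]
      have e : ∀ s : ℝ, F (k,r) s
          = (c ^ (2*k+1) / ((2*k+1).factorial : ℝ) * P c n r) *
            (s^(2*k+1) * (t-s)^(2*r+2*n+1)) := by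
        intro s; simp only [hF]; rw [mul_pow]; ring
      rw [intervalIntegral.integral_congr (fun s _ => e s),
        intervalIntegral.integral_const_mul, beta_nat ht _ _]
      unfold P
      simp only [hQ]
      have hx : ((2*k+1).factorial : ℝ) ≠ 0 := by positivity
      have hy : ((2*r+2*n+1).factorial : ℝ) ≠ 0 := by positivity
      rw [show (2*k+1)+(2*r+2*n+1)+1 = 2*(k+r)+2*n+3 from by omega,
        show 2*(k+r)+n+2 = (2*k+1)+(2*r+n+1) from by omega, pow_add]
      field_simp
      ring
    have hQsum : Summable Q := by
      refine Summable.of_norm_bounded hsum (fun p => ?_)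
      rw [← eval p]
      exact norm_integral_le_integral_norm _
    have step3 : J c (n+1) t = ∑' p : ℕ × ℕ, Q p := by
      rw [step1, intervalIntegral.integral_of_le ht,
        setIntegral_congr_fun measurableSet_Ioc (fun s _ => step2 s), interchange]
      exact tsum_congr eval
    rw [step3, tsum_antidiag hQsum]
    refine tsum_congr fun R => ?_
    rw [Finset.Nat.sum_antidiagonal_eq_sum_range_succ_mk]
    have h1 : ∀ k ∈ Finset.range (R+1), Q (k, R-k)
        = (((n+(R-k)).factorial : ℝ) / ((n.factorial : ℝ) * ((R-k).factorial : ℝ))) *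
          (c ^ (2*R+n+2) * t ^ (2*R+2*n+3) / ((2*R+2*n+3).factorial : ℝ)) := by
      intro k hk
      simp only [Finset.mem_range] at hk
      have hkR : k + (R-k) = R := by omega
      simp only [hQ, hkR]
      ring
    rw [Finset.sum_congr rfl h1, ← Finset.sum_mul]
    have hrefl := Finset.sum_range_reflect
      (fun j => ((n+j).factorial : ℝ) / ((n.factorial : ℝ) * (j.factorial : ℝ))) (R+1)
    have h2 : ∑ k ∈ Finset.range (R+1),
        (((n+(R-k)).factorial : ℝ) / ((n.factorial : ℝ) * ((R-k).factorial : ℝ)))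
        = (((n+R+1).choose (n+1) : ℕ) : ℝ) := by
      rw [show (∑ k ∈ Finset.range (R+1),
          (((n+(R-k)).factorial : ℝ) / ((n.factorial : ℝ) * ((R-k).factorial : ℝ))))
        = ∑ k ∈ Finset.range (R+1),
          (fun j => ((n+j).factorial : ℝ) / ((n.factorial : ℝ) * (j.factorial : ℝ))) (R+1-1-k)
        from rfl, hrefl]
      have h3 : ∀ j ∈ Finset.range (R+1),
          ((n+j).factorial : ℝ)/((n.factorial : ℝ)*(j.factorial : ℝ))
          = (((n+j).choose n : ℕ) : ℝ) := by
        intro j _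
        rw [Nat.cast_choose ℝ (Nat.le_add_right n j), Nat.add_sub_cancel_left]
      rw [Finset.sum_congr rfl h3, ← Nat.cast_sum, hockey n R]
    rw [h2]
    unfold P
    rw [Nat.cast_choose ℝ (show n+1 ≤ n+R+1 by omega),
      show (n+R+1)-(n+1) = R from by omega,
      show n+1+R = n+R+1 from by omega,
      show 2*R+(n+1)+1 = 2*R+n+2 from by omega,
      show 2*R+2*(n+1)+1 = 2*R+2*n+3 from by omega]
    have hz : ((n+1).factorial : ℝ) ≠ 0 := by positivity
    have hw : ((2*R+2*n+3).factorial : ℝ) ≠ 0 := by positivity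
    field_simp

end IterSinhAux

/-- explicit series expression
`J_n(t) = (t^{2n+1} c^{n+1}/n!) ∑_{r=0}^∞ ((n+r)!/r!) (ct)^{2r}/(2r+2n+1)!`. -/
theorem iterSinh_series (c : ℝ) (hc : 0 < c) (n : ℕ) (t : ℝ) (ht : 0 < t) :
    J c n t = t ^ (2 * n + 1) * c ^ (n + 1) / (n.factorial : ℝ) *
      ∑' r : ℕ, ((n + r).factorial : ℝ) / (r.factorial : ℝ) *
        (c * t) ^ (2 * r) / ((2 * r + 2 * n + 1).factorial : ℝ) := by
  rw [IterSinhAux.J_eq c hc n t ht.le, ← tsum_mul_left]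
  refine tsum_congr fun r => ?_
  unfold IterSinhAux.P
  rw [mul_pow]
  ring
end

section
/- For n ≥ 1, the function U_n(t) = ∫₀ᵗ dt₁ ⋯ ∫_{t_{n−1}}ᵗ dt_n ∏_{k=1}^{n+1} cosh²(c(t_k − t_{k−1})) (t₀=0, t_{n+1}=t) satisfies the third-order difference-differential equation U_n''' (t) = U_{n−1}''(t) + 4c² U_n'(t) − 2c² U_{n−1}(t), with U₀(t) = cosh²(ct). -/
open Real MeasureTheory

/-- `U_n(t)`: simplex integral of products of squared hyperbolic cosines of
increments, `U_0(t) = cosh²(ct)`. -/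
noncomputable def U (c : ℝ) (n : ℕ) (t : ℝ) : ℝ :=
  iterInt (fun u => Real.cosh (c * u) ^ 2) n 0 t

noncomputable def prim (g : ℝ → ℝ) (x : ℝ) : ℝ := ∫ u in (0:ℝ)..x, g u

lemma prim_hasDerivAt {g : ℝ → ℝ} (hg : Continuous g) (x : ℝ) :
    HasDerivAt (prim g) (g x) x := by
  unfold prim
  exact intervalIntegral.integral_hasDerivAt_right (hg.intervalIntegrable _ _)
    (hg.stronglyMeasurableAtFilter _ _) hg.continuousAt

lemma prim_contDiff {g : ℝ → ℝ} (hg : ContDiff ℝ (⊤ : ℕ∞) g) :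
    ContDiff ℝ (⊤ : ℕ∞) (prim g) := by
  rw [contDiff_infty_iff_deriv]
  refine ⟨fun x => (prim_hasDerivAt hg.continuous x).differentiableAt, ?_⟩
  have hd : deriv (prim g) = g := funext fun x => (prim_hasDerivAt hg.continuous x).deriv
  rw [hd]; exact hg

lemma iterInt_shift (f : ℝ → ℝ) (n : ℕ) : ∀ (a t : ℝ), iterInt f n a t = iterInt f n 0 (t - a) := by
  induction n with
  | zero => intro a t; simp [iterInt]
  | succ n ih =>
    intro a t
    show (∫ s in a..t, f (s - a) * iterInt f n s t)
      = ∫ s in (0:ℝ)..(t - a), f (s - 0) * iterInt f n s (t - a)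
    calc (∫ s in a..t, f (s - a) * iterInt f n s t)
        = ∫ s in a..t, (fun u => f u * iterInt f n 0 (t - a - u)) (s - a) := by
          apply intervalIntegral.integral_congr
          intro s _
          show f (s - a) * iterInt f n s t = f (s - a) * iterInt f n 0 (t - a - (s - a))
          rw [ih s t, show t - a - (s - a) = t - s by ring]
      _ = ∫ u in a - a..t - a, f u * iterInt f n 0 (t - a - u) :=
          intervalIntegral.integral_comp_sub_right (fun u => f u * iterInt f n 0 (t - a - u)) a
      _ = ∫ s in (0:ℝ)..(t - a), f (s - 0) * iterInt f n s (t - a) := by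
          rw [sub_self]
          apply intervalIntegral.integral_congr
          intro s _
          show f s * iterInt f n 0 (t - a - s) = f (s - 0) * iterInt f n s (t - a)
          rw [ih s (t - a), sub_zero]

lemma U_succ (c : ℝ) (n : ℕ) (x : ℝ) :
    U c (n+1) x = ∫ u in (0:ℝ)..x, Real.cosh (c*(x-u))^2 * U c n u := by
  show (∫ s in (0:ℝ)..x, Real.cosh (c * (s - 0)) ^ 2
      * iterInt (fun u => Real.cosh (c * u) ^ 2) n s x) = _
  have h1 : (∫ s in (0:ℝ)..x, Real.cosh (c * (s - 0)) ^ 2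
      * iterInt (fun u => Real.cosh (c * u) ^ 2) n s x)
      = ∫ s in (0:ℝ)..x, (fun u => Real.cosh (c*(x-u))^2 * U c n u) (x - s) := by
    apply intervalIntegral.integral_congr
    intro s _
    show Real.cosh (c * (s - 0)) ^ 2 * iterInt (fun u => Real.cosh (c * u) ^ 2) n s x
        = Real.cosh (c*(x-(x-s)))^2 * U c n (x - s)
    rw [show x - (x - s) = s by ring, iterInt_shift _ n s x, sub_zero]
    rfl
  rw [h1,
    intervalIntegral.integral_comp_sub_left (fun u => Real.cosh (c*(x-u))^2 * U c n u) x,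
    sub_self, sub_zero]

lemma U_decomp (c : ℝ) (n : ℕ) (hcont : Continuous (U c n)) (x : ℝ) :
    U c (n+1) x = (1/2) * prim (U c n) x
      + (1/4) * (Real.exp (2*c*x) * prim (fun u => Real.exp (-(2*c*u)) * U c n u) x)
      + (1/4) * (Real.exp (-(2*c*x)) * prim (fun u => Real.exp (2*c*u) * U c n u) x) := by
  rw [U_succ]
  have key : ∀ u : ℝ, Real.cosh (c*(x-u))^2 * U c n u
      = (1/2) * U c n u
        + ((1/4) * Real.exp (2*c*x)) * (Real.exp (-(2*c*u)) * U c n u)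
        + ((1/4) * Real.exp (-(2*c*x))) * (Real.exp (2*c*u) * U c n u) := by
    intro u
    have hc2 : Real.cosh (c*(x-u))^2
        = 1/2 + Real.exp (2*c*x) * Real.exp (-(2*c*u))/4
          + Real.exp (-(2*c*x)) * Real.exp (2*c*u)/4 := by
      rw [← Real.exp_add, ← Real.exp_add,
        show 2*c*x + -(2*c*u) = 2*(c*(x-u)) by ring,
        show -(2*c*x) + 2*c*u = -(2*(c*(x-u))) by ring]
      set y := c*(x-u)
      rw [Real.cosh_eq, show (2:ℝ)*y = y + y by ring, Real.exp_add,
        show -(y+y) = -y + -y by ring, Real.exp_add, Real.exp_neg]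
      have hy := Real.exp_ne_zero y
      field_simp
      ring
    rw [hc2]; ring
  simp only [key]
  have i1 : IntervalIntegrable (fun u => (1/2) * U c n u) volume 0 x :=
    (continuous_const.mul hcont).intervalIntegrable _ _
  have i2 : IntervalIntegrable
      (fun u => ((1/4) * Real.exp (2*c*x)) * (Real.exp (-(2*c*u)) * U c n u)) volume 0 x := by
    apply Continuous.intervalIntegrable
    exact continuous_const.mul ((Real.continuous_exp.comp (by continuity)).mul hcont)
  have i3 : IntervalIntegrable
      (fun u => ((1/4) * Real.exp (-(2*c*x))) * (Real.exp (2*c*u) * U c n u)) volume 0 x := by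
    apply Continuous.intervalIntegrable
    exact continuous_const.mul ((Real.continuous_exp.comp (by continuity)).mul hcont)
  rw [intervalIntegral.integral_add (i1.add i2) i3, intervalIntegral.integral_add i1 i2,
    intervalIntegral.integral_const_mul, intervalIntegral.integral_const_mul,
    intervalIntegral.integral_const_mul]
  unfold prim
  ring

lemma U_contDiff (c : ℝ) (n : ℕ) : ContDiff ℝ (⊤ : ℕ∞) (U c n) := by
  induction n with
  | zero =>
    have h0 : U c 0 = fun t => Real.cosh (c*t)^2 := by
      funext t; simp [U, iterInt]
    rw [h0]
    exact (Real.contDiff_cosh.comp (contDiff_const.mul contDiff_id)).pow 2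
  | succ n ih =>
    have hfun : U c (n+1) = fun x => (1/2) * prim (U c n) x
        + (1/4) * (Real.exp (2*c*x) * prim (fun u => Real.exp (-(2*c*u)) * U c n u) x)
        + (1/4) * (Real.exp (-(2*c*x)) * prim (fun u => Real.exp (2*c*u) * U c n u) x) :=
      funext (U_decomp c n ih.continuous)
    rw [hfun]
    have e1 : ContDiff ℝ (⊤ : ℕ∞) fun x : ℝ => Real.exp (2*c*x) :=
      Real.contDiff_exp.comp (contDiff_const.mul contDiff_id)
    have e2 : ContDiff ℝ (⊤ : ℕ∞) fun x : ℝ => Real.exp (-(2*c*x)) :=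
      Real.contDiff_exp.comp ((contDiff_const.mul contDiff_id).neg)
    have p1 := prim_contDiff ih
    have p2 := prim_contDiff (g := fun u => Real.exp (-(2*c*u)) * U c n u) (e2.mul ih)
    have p3 := prim_contDiff (g := fun u => Real.exp (2*c*u) * U c n u) (e1.mul ih)
    exact ((contDiff_const.mul p1).add (contDiff_const.mul (e1.mul p2))).add
      (contDiff_const.mul (e2.mul p3))


lemma expc_hasDerivAt (c x : ℝ) :
    HasDerivAt (fun y => Real.exp (2*c*y)) (2*c*Real.exp (2*c*x)) x := by
  have h := ((hasDerivAt_id x).const_mul (2*c)).exp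
  simpa [mul_comm] using h

lemma expc_neg_hasDerivAt (c x : ℝ) :
    HasDerivAt (fun y => Real.exp (-(2*c*y))) (-(2*c)*Real.exp (-(2*c*x))) x := by
  have h := (((hasDerivAt_id x).const_mul (2*c)).neg).exp
  simpa [mul_comm] using h

lemma expEE (c x : ℝ) : Real.exp (2*c*x) * Real.exp (-(2*c*x)) = 1 := by
  rw [← Real.exp_add]; simp

lemma hasDerivAt_U_succ (c : ℝ) (n : ℕ) (x : ℝ) :
    HasDerivAt (U c (n+1))
      (U c n x + (c/2) * (Real.exp (2*c*x) * prim (fun u => Real.exp (-(2*c*u)) * U c n u) x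
        - Real.exp (-(2*c*x)) * prim (fun u => Real.exp (2*c*u) * U c n u) x)) x := by
  have hcont := (U_contDiff c n).continuous
  have hBc : Continuous (fun u => Real.exp (-(2*c*u)) * U c n u) :=
    (Real.continuous_exp.comp (by continuity)).mul hcont
  have hCc : Continuous (fun u => Real.exp (2*c*u) * U c n u) :=
    (Real.continuous_exp.comp (by continuity)).mul hcont
  have hA := prim_hasDerivAt hcont x
  have hB := prim_hasDerivAt hBc x
  have hC := prim_hasDerivAt hCc x
  have hfun : U c (n+1) = fun y => (1/2) * prim (U c n) y
      + (1/4) * (Real.exp (2*c*y) * prim (fun u => Real.exp (-(2*c*u)) * U c n u) y)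
      + (1/4) * (Real.exp (-(2*c*y)) * prim (fun u => Real.exp (2*c*u) * U c n u) y) :=
    funext (U_decomp c n hcont)
  rw [hfun]
  have hsum := ((hA.const_mul (1/2:ℝ)).add
      (((expc_hasDerivAt c x).mul hB).const_mul (1/4:ℝ))).add
      (((expc_neg_hasDerivAt c x).mul hC).const_mul (1/4:ℝ))
  convert hsum using 1
  case e'_9 =>
    have hEE := expEE c x
    linear_combination (-(U c n x) / 2) * hEE
  all_goals rfl

lemma deriv_U_succ (c : ℝ) (n : ℕ) :
    deriv (U c (n+1)) = fun x => U c n x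
      + (c/2) * (Real.exp (2*c*x) * prim (fun u => Real.exp (-(2*c*u)) * U c n u) x
        - Real.exp (-(2*c*x)) * prim (fun u => Real.exp (2*c*u) * U c n u) x) :=
  funext fun x => (hasDerivAt_U_succ c n x).deriv

lemma hasDerivAt_deriv_U_succ (c : ℝ) (n : ℕ) (x : ℝ) :
    HasDerivAt (deriv (U c (n+1)))
      (deriv (U c n) x + c^2 * (Real.exp (2*c*x) * prim (fun u => Real.exp (-(2*c*u)) * U c n u) x
        + Real.exp (-(2*c*x)) * prim (fun u => Real.exp (2*c*u) * U c n u) x)) x := by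
  have hcont := (U_contDiff c n).continuous
  have hBc : Continuous (fun u => Real.exp (-(2*c*u)) * U c n u) :=
    (Real.continuous_exp.comp (by continuity)).mul hcont
  have hCc : Continuous (fun u => Real.exp (2*c*u) * U c n u) :=
    (Real.continuous_exp.comp (by continuity)).mul hcont
  have hB := prim_hasDerivAt hBc x
  have hC := prim_hasDerivAt hCc x
  have hh : HasDerivAt (U c n) (deriv (U c n) x) x :=
    ((contDiff_infty_iff_deriv.mp (U_contDiff c n)).1 x).hasDerivAt
  rw [deriv_U_succ]
  have hsum := hh.add ((((expc_hasDerivAt c x).mul hB).sub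
    ((expc_neg_hasDerivAt c x).mul hC)).const_mul (c/2:ℝ))
  convert hsum using 1
  case e'_9 => ring
  all_goals rfl

lemma deriv2_U_succ (c : ℝ) (n : ℕ) :
    deriv (deriv (U c (n+1))) = fun x => deriv (U c n) x
      + c^2 * (Real.exp (2*c*x) * prim (fun u => Real.exp (-(2*c*u)) * U c n u) x
        + Real.exp (-(2*c*x)) * prim (fun u => Real.exp (2*c*u) * U c n u) x) :=
  funext fun x => (hasDerivAt_deriv_U_succ c n x).deriv

lemma hasDerivAt_deriv2_U_succ (c : ℝ) (n : ℕ) (x : ℝ) :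
    HasDerivAt (deriv (deriv (U c (n+1))))
      (deriv (deriv (U c n)) x + 2*c^2 * U c n x
        + 2*c^3 * (Real.exp (2*c*x) * prim (fun u => Real.exp (-(2*c*u)) * U c n u) x
          - Real.exp (-(2*c*x)) * prim (fun u => Real.exp (2*c*u) * U c n u) x)) x := by
  have hcont := (U_contDiff c n).continuous
  have hBc : Continuous (fun u => Real.exp (-(2*c*u)) * U c n u) :=
    (Real.continuous_exp.comp (by continuity)).mul hcont
  have hCc : Continuous (fun u => Real.exp (2*c*u) * U c n u) :=
    (Real.continuous_exp.comp (by continuity)).mul hcont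
  have hB := prim_hasDerivAt hBc x
  have hC := prim_hasDerivAt hCc x
  have hh : HasDerivAt (deriv (U c n)) (deriv (deriv (U c n)) x) x :=
    ((contDiff_infty_iff_deriv.mp
      (contDiff_infty_iff_deriv.mp (U_contDiff c n)).2).1 x).hasDerivAt
  rw [deriv2_U_succ]
  have hsum := hh.add ((((expc_hasDerivAt c x).mul hB).add
    ((expc_neg_hasDerivAt c x).mul hC)).const_mul (c^2:ℝ))
  convert hsum using 1
  case e'_9 =>
    have hEE := expEE c x
    linear_combination (-(2*c^2) * U c n x) * hEE
  all_goals rfl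

/-- for n ≥ 1, `U_n''' = U_{n-1}'' + 4c² U_n' - 2c² U_{n-1}`. -/
theorem iterCoshSq_ode (c : ℝ) (hc : 0 < c) (n : ℕ) (hn : 1 ≤ n) (t : ℝ) (ht : 0 < t) :
    deriv (deriv (deriv (U c n))) t
      = deriv (deriv (U c (n - 1))) t + 4 * c^2 * deriv (U c n) t
        - 2 * c^2 * U c (n - 1) t := by
  obtain ⟨m, rfl⟩ : ∃ m, n = m + 1 := ⟨n - 1, by omega⟩
  simp only [Nat.add_sub_cancel]
  have d3 := (hasDerivAt_deriv2_U_succ c m t).deriv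
  have d1 := congrFun (deriv_U_succ c m) t
  rw [d3, d1]
  ring
end

section
/- Let A = (λ + √(λ²+4c²))/2 and B = (λ − √(λ²+4c²))/2, and E(t) as in the mean hyperbolic distance formula. Then for k = 1: (λ e^{−λt}/(1−e^{−λt})) ∫₀ᵗ e^{λ(t−s)} E(t−s) ds = (λ/√(λ²+4c²)) · sinh((t/2)√(λ²+4c²)) / sinh(λt/2). -/
set_option maxHeartbeats 1000000


open Real MeasureTheory

/-- The mean hyperbolic distance
`E(t) = e^{-λt/2}[cosh((t/2)√(λ²+4c²)) + (λ/√(λ²+4c²)) sinh((t/2)√(λ²+4c²))]`. -/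
noncomputable def meanDist (lam c t : ℝ) : ℝ :=
  Real.exp (-(lam * t) / 2) *
    (Real.cosh (t / 2 * Real.sqrt (lam^2 + 4*c^2))
      + lam / Real.sqrt (lam^2 + 4*c^2) * Real.sinh (t / 2 * Real.sqrt (lam^2 + 4*c^2)))

lemma int_exp_aux (a t : ℝ) (ha : a ≠ 0) :
    ∫ s in (0:ℝ)..t, Real.exp (a * (t - s)) = (Real.exp (a * t) - 1) / a := by
  have h : ∀ s ∈ Set.uIcc (0:ℝ) t,
      HasDerivAt (fun s : ℝ => -(Real.exp (a * (t - s)) / a)) (Real.exp (a * (t - s))) s := by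
    intro s _
    have h1 : HasDerivAt (fun x : ℝ => a * (t - x)) (a * (-1)) s :=
      ((hasDerivAt_id s).const_sub t).const_mul a
    have h2 := (h1.exp.div_const a).neg
    refine h2.congr_deriv ?_
    field_simp
  have hint : IntervalIntegrable (fun s : ℝ => Real.exp (a * (t - s))) volume 0 t :=
    (Real.continuous_exp.comp (by continuity)).intervalIntegrable 0 t
  rw [intervalIntegral.integral_eq_sub_of_hasDerivAt h hint]
  simp
  field_simp
  ring

/-- the mean hyperbolic distance for the motion jumping back to
the origin at the first Poisson event, conditioned on `N(t) ≥ 1`: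
`(λe^{-λt}/(1-e^{-λt})) ∫₀ᵗ e^{λ(t-s)} E(t-s) ds
  = (λ/√(λ²+4c²)) sinh((t/2)√(λ²+4c²))/sinh(λt/2)`. -/
theorem jump_back_first_event (lam c t : ℝ) (hlam : 0 < lam) (hc : 0 < c) (ht : 0 < t) :
    lam * Real.exp (-lam * t) / (1 - Real.exp (-lam * t)) *
        ∫ s in (0:ℝ)..t, Real.exp (lam * (t - s)) * meanDist lam c (t - s)
      = lam / Real.sqrt (lam^2 + 4*c^2) *
          (Real.sinh (t / 2 * Real.sqrt (lam^2 + 4*c^2)) / Real.sinh (lam * t / 2)) := by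
  set w := Real.sqrt (lam^2 + 4*c^2) with hw
  have hw2 : w^2 = lam^2 + 4*c^2 := Real.sq_sqrt (by positivity)
  have hwpos : 0 < w := Real.sqrt_pos.mpr (by positivity)
  have hlw : lam < w := by nlinarith
  have hwne : w ≠ 0 := ne_of_gt hwpos
  have hane : (lam + w) / 2 ≠ 0 := by positivity
  have hbne : (lam - w) / 2 ≠ 0 := by
    intro h
    have : lam = w := by linarith [(div_eq_zero_iff.mp h).resolve_right (by norm_num)]
    linarith
  -- pointwise rewrite of the integrand
  have hpt : ∀ s : ℝ, Real.exp (lam * (t - s)) * meanDist lam c (t - s)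
      = (1/2 + lam/(2*w)) * Real.exp ((lam + w)/2 * (t - s))
        + (1/2 - lam/(2*w)) * Real.exp ((lam - w)/2 * (t - s)) := by
    intro s
    unfold meanDist
    rw [← hw]
    rw [Real.cosh_eq, Real.sinh_eq,
      show (lam + w)/2 * (t - s) = lam * (t - s) + -(lam * (t - s)) / 2 + (t - s) / 2 * w by ring,
      show (lam - w)/2 * (t - s) = lam * (t - s) + -(lam * (t - s)) / 2 + -((t - s) / 2 * w) by ring,
      Real.exp_add, Real.exp_add, Real.exp_add, Real.exp_add,
      Real.exp_neg ((t - s) / 2 * w)]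
    have hE : Real.exp ((t - s) / 2 * w) ≠ 0 := Real.exp_ne_zero _
    field_simp
    ring
  have hintegral : ∫ s in (0:ℝ)..t, Real.exp (lam * (t - s)) * meanDist lam c (t - s)
      = (1/2 + lam/(2*w)) * ((Real.exp ((lam + w)/2 * t) - 1) / ((lam + w)/2))
        + (1/2 - lam/(2*w)) * ((Real.exp ((lam - w)/2 * t) - 1) / ((lam - w)/2)) := by
    rw [intervalIntegral.integral_congr (g := fun s =>
      (1/2 + lam/(2*w)) * Real.exp ((lam + w)/2 * (t - s))
        + (1/2 - lam/(2*w)) * Real.exp ((lam - w)/2 * (t - s))) (fun s _ => hpt s)]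
    have hc1 : Continuous fun s : ℝ => (1/2 + lam/(2*w)) * Real.exp ((lam + w)/2 * (t - s)) := by
      continuity
    have hc2 : Continuous fun s : ℝ => (1/2 - lam/(2*w)) * Real.exp ((lam - w)/2 * (t - s)) := by
      continuity
    rw [intervalIntegral.integral_add (hc1.intervalIntegrable 0 t) (hc2.intervalIntegrable 0 t),
      intervalIntegral.integral_const_mul, intervalIntegral.integral_const_mul,
      int_exp_aux _ _ hane, int_exp_aux _ _ hbne]
  have hane' : lam + w ≠ 0 := by positivity
  have hbne' : lam - w ≠ 0 := by intro h; nlinarith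
  rw [hintegral, Real.sinh_eq, Real.sinh_eq]
  -- express all exponentials in terms of L = exp(lam*t/2), W = exp(t/2*w)
  have e1 : Real.exp (-lam * t) = (Real.exp (lam * t / 2) * Real.exp (lam * t / 2))⁻¹ := by
    rw [← Real.exp_add, ← Real.exp_neg]; ring_nf
  have e2 : Real.exp ((lam + w)/2 * t) = Real.exp (lam * t / 2) * Real.exp (t / 2 * w) := by
    rw [← Real.exp_add]; ring_nf
  have e3 : Real.exp ((lam - w)/2 * t) = Real.exp (lam * t / 2) * (Real.exp (t / 2 * w))⁻¹ := by
    rw [← Real.exp_neg, ← Real.exp_add]; ring_nf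
  have e4 : Real.exp (-(t / 2 * w)) = (Real.exp (t / 2 * w))⁻¹ := Real.exp_neg _
  have e5 : Real.exp (-(lam * t / 2)) = (Real.exp (lam * t / 2))⁻¹ := Real.exp_neg _
  rw [e1, e2, e3, e4, e5]
  rw [show (1/2 + lam/(2*w)) * ((Real.exp (lam * t / 2) * Real.exp (t / 2 * w) - 1) / ((lam + w)/2))
        + (1/2 - lam/(2*w)) * ((Real.exp (lam * t / 2) * (Real.exp (t / 2 * w))⁻¹ - 1) / ((lam - w)/2))
      = (Real.exp (lam * t / 2) * Real.exp (t / 2 * w)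
          - Real.exp (lam * t / 2) * (Real.exp (t / 2 * w))⁻¹) / w by
    field_simp
    ring]
  set L := Real.exp (lam * t / 2) with hL
  set W := Real.exp (t / 2 * w) with hW
  have hL1 : 1 < L := by
    rw [hL]; exact Real.one_lt_exp_iff.mpr (by positivity)
  have hLne : L ≠ 0 := by positivity
  have hWne : W ≠ 0 := Real.exp_ne_zero _
  have hd1 : 1 - (L * L)⁻¹ ≠ 0 := by
    have : (L * L)⁻¹ < 1 := by
      rw [inv_lt_one_iff₀]; right; nlinarith
    linarith
  have hd2 : L - L⁻¹ ≠ 0 := by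
    have : L⁻¹ < 1 := by rw [inv_lt_one_iff₀]; right; exact hL1
    intro h; nlinarith
  field_simp
end
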